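/- Let K be a field, M a p × q matrix over K, and suppose the columns of M are partitioned into n blocks. If every p × p submatrix of M whose p columns are chosen from p pairwise distinct blocks is non-invertible, then there exist an invertible p × p matrix Q and a positive integer m ≤ p such that in QM, the last m rows are identically zero on all but at most m − 1 of the column blocks. -/

import Mathlib

open Module Submodule Matrix

theorem rado_defect {K V : Type*} [Field K] [AddCommGroup V] [Module K V]
    [FiniteDimensional K V] [DecidableEq V] {n : ℕ} (p : ℕ) (A : Fin n → Finset V)
    (hyp : ∀ S : Finset (Fin n),
      p + S.card ≤ finrank K (span K (↑(S.biUnion A) : Set V)) + n) :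
    ∃ (g : Fin p → Fin n) (v : Fin p → V), Function.Injective g ∧
      (∀ k, v k ∈ A (g k)) ∧ LinearIndependent K v := by
  generalize hN : ∑ i, (A i).card = N
  induction N using Nat.strong_induction_on generalizing A with
  | _ N ih =>
  by_cases hsmall : ∀ i, (A i).card ≤ 1
  · -- base case: all blocks are singletons or empty
    have htop := hyp Finset.univ
    simp only [Finset.card_univ, Fintype.card_fin] at htop
    have hp : p ≤ finrank K (span K (↑(Finset.univ.biUnion A) : Set V)) := by omega
    obtain ⟨s, hsT, hspan, hind⟩ :=
      exists_linearIndependent K (↑(Finset.univ.biUnion A) : Set V)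
    have hsfin : s.Finite := (Finset.univ.biUnion A).finite_toSet.subset hsT
    haveI := hsfin.fintype
    have hcard : p ≤ s.toFinset.card := by
      rw [← hspan] at hp
      rwa [finrank_span_set_eq_card hind] at hp
    obtain ⟨t, hts, htcard⟩ := Finset.exists_subset_card_eq hcard
    have eqv : (t : Finset V) ≃ Fin p := t.equivFinOfCardEq htcard
    set v : Fin p → V := fun k => ((eqv.symm k : t) : V) with hv
    have hmem : ∀ k : Fin p, v k ∈ s := by
      intro k
      exact Set.mem_toFinset.mp (hts (eqv.symm k).2)
    have hvinj : Function.Injective v := by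
      intro a b hab
      exact eqv.symm.injective (Subtype.ext hab)
    have hvind : LinearIndependent K v := by
      have hinj : Function.Injective (fun k : Fin p => (⟨v k, hmem k⟩ : s)) := by
        intro a b hab
        rw [Subtype.mk.injEq] at hab
        exact hvinj hab
      exact hind.comp _ hinj
    have hex : ∀ k, ∃ i, v k ∈ A i := by
      intro k
      obtain ⟨i, -, hi⟩ := Finset.mem_biUnion.mp (hsT (hmem k))
      exact ⟨i, hi⟩
    choose g hg using hex
    refine ⟨g, v, ?_, hg, hvind⟩
    intro a b hab
    apply hvinj
    have h1 : v a ∈ A (g a) := hg a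
    have h2 : v b ∈ A (g a) := hab ▸ hg b
    exact Finset.card_le_one.mp (hsmall (g a)) _ h1 _ h2
  · push_neg at hsmall
    obtain ⟨k, hk⟩ := hsmall
    obtain ⟨x, hx, y, hy, hxy⟩ := Finset.one_lt_card.mp hk
    set A1 := Function.update A k ((A k).erase x) with hA1
    set A2 := Function.update A k ((A k).erase y) with hA2
    have hsub1 : ∀ i, A1 i ⊆ A i := by
      intro i
      by_cases hik : i = k
      · subst hik; rw [hA1, Function.update_self]; exact Finset.erase_subset _ _
      · rw [hA1, Function.update_of_ne hik]
    have hsub2 : ∀ i, A2 i ⊆ A i := by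
      intro i
      by_cases hik : i = k
      · subst hik; rw [hA2, Function.update_self]; exact Finset.erase_subset _ _
      · rw [hA2, Function.update_of_ne hik]
    have hlt1 : ∑ i, (A1 i).card < N := by
      rw [← hN]
      apply Finset.sum_lt_sum (fun i _ => Finset.card_le_card (hsub1 i))
      refine ⟨k, Finset.mem_univ k, ?_⟩
      rw [hA1, Function.update_self]
      exact Finset.card_erase_lt_of_mem hx
    have hlt2 : ∑ i, (A2 i).card < N := by
      rw [← hN]
      apply Finset.sum_lt_sum (fun i _ => Finset.card_le_card (hsub2 i))
      refine ⟨k, Finset.mem_univ k, ?_⟩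
      rw [hA2, Function.update_self]
      exact Finset.card_erase_lt_of_mem hy
    by_cases h1 : ∀ S : Finset (Fin n),
        p + S.card ≤ finrank K (span K (↑(S.biUnion A1) : Set V)) + n
    · obtain ⟨g, v, hg, hvmem, hvind⟩ := ih _ hlt1 A1 h1 rfl
      exact ⟨g, v, hg, fun k' => hsub1 _ (hvmem k'), hvind⟩
    by_cases h2 : ∀ S : Finset (Fin n),
        p + S.card ≤ finrank K (span K (↑(S.biUnion A2) : Set V)) + n
    · obtain ⟨g, v, hg, hvmem, hvind⟩ := ih _ hlt2 A2 h2 rfl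
      exact ⟨g, v, hg, fun k' => hsub2 _ (hvmem k'), hvind⟩
    exfalso
    push_neg at h1 h2
    obtain ⟨S1, hS1⟩ := h1
    obtain ⟨S2, hS2⟩ := h2
    have hk1 : k ∈ S1 := by
      by_contra hk1
      have heq : S1.biUnion A1 = S1.biUnion A := by
        apply Finset.biUnion_congr rfl
        intro i hi
        rw [hA1, Function.update_of_ne (by rintro rfl; exact hk1 hi)]
      rw [heq] at hS1
      exact absurd (hyp S1) (by omega)
    have hk2 : k ∈ S2 := by
      by_contra hk2
      have heq : S2.biUnion A2 = S2.biUnion A := by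
        apply Finset.biUnion_congr rfl
        intro i hi
        rw [hA2, Function.update_of_ne (by rintro rfl; exact hk2 hi)]
      rw [heq] at hS2
      exact absurd (hyp S2) (by omega)
    set U := span K (↑(S1.biUnion A1) : Set V) with hU
    set W := span K (↑(S2.biUnion A2) : Set V) with hW
    have key1 : span K (↑((S1 ∪ S2).biUnion A) : Set V) ≤ U ⊔ W := by
      rw [span_le]
      intro z hz
      rw [Finset.mem_coe, Finset.mem_biUnion] at hz
      obtain ⟨i, hi, hzi⟩ := hz
      apply SetLike.mem_coe.mpr
      by_cases hik : i = k
      · subst hik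
        by_cases hzx : z = x
        · subst hzx
          apply Submodule.mem_sup_right
          apply subset_span
          rw [Finset.mem_coe, Finset.mem_biUnion]
          refine ⟨i, hk2, ?_⟩
          rw [hA2, Function.update_self]
          exact Finset.mem_erase.mpr ⟨hxy, hzi⟩
        · apply Submodule.mem_sup_left
          apply subset_span
          rw [Finset.mem_coe, Finset.mem_biUnion]
          refine ⟨i, hk1, ?_⟩
          rw [hA1, Function.update_self]
          exact Finset.mem_erase.mpr ⟨hzx, hzi⟩
      · rcases Finset.mem_union.mp hi with hi1 | hi2
        · apply Submodule.mem_sup_left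
          apply subset_span
          rw [Finset.mem_coe, Finset.mem_biUnion]
          refine ⟨i, hi1, ?_⟩
          rw [hA1, Function.update_of_ne hik]
          exact hzi
        · apply Submodule.mem_sup_right
          apply subset_span
          rw [Finset.mem_coe, Finset.mem_biUnion]
          refine ⟨i, hi2, ?_⟩
          rw [hA2, Function.update_of_ne hik]
          exact hzi
    have key2 : span K (↑(((S1 ∩ S2).erase k).biUnion A) : Set V) ≤ U ⊓ W := by
      rw [span_le]
      intro z hz
      rw [Finset.mem_coe, Finset.mem_biUnion] at hz
      obtain ⟨i, hi, hzi⟩ := hz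
      obtain ⟨hik, hiS⟩ := Finset.mem_erase.mp hi
      rw [Finset.mem_inter] at hiS
      apply SetLike.mem_coe.mpr
      refine Submodule.mem_inf.mpr ⟨?_, ?_⟩
      · apply subset_span
        rw [Finset.mem_coe, Finset.mem_biUnion]
        refine ⟨i, hiS.1, ?_⟩
        rw [hA1, Function.update_of_ne hik]
        exact hzi
      · apply subset_span
        rw [Finset.mem_coe, Finset.mem_biUnion]
        refine ⟨i, hiS.2, ?_⟩
        rw [hA2, Function.update_of_ne hik]
        exact hzi
    have e1 := hyp (S1 ∪ S2)
    have e2 := hyp ((S1 ∩ S2).erase k)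
    have m1 : finrank K (span K (↑((S1 ∪ S2).biUnion A) : Set V))
        ≤ finrank K ↥(U ⊔ W) := Submodule.finrank_mono key1
    have m2 : finrank K (span K (↑(((S1 ∩ S2).erase k).biUnion A) : Set V))
        ≤ finrank K ↥(U ⊓ W) := Submodule.finrank_mono key2
    have hsumeq := Submodule.finrank_sup_add_finrank_inf_eq U W
    have hcardu : (S1 ∪ S2).card + (S1 ∩ S2).card = S1.card + S2.card :=
      Finset.card_union_add_card_inter S1 S2
    have hce : ((S1 ∩ S2).erase k).card + 1 = (S1 ∩ S2).card :=
      Finset.card_erase_add_one (Finset.mem_inter.mpr ⟨hk1, hk2⟩)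
    linarith

theorem exists_equiv_kill {K : Type*} [Field K] {p r : ℕ} (W : Submodule K (Fin p → K))
    (hr : finrank K W = r) (hrp : r ≤ p) :
    ∃ e : (Fin p → K) ≃ₗ[K] (Fin p → K), ∀ w ∈ W, ∀ i : Fin p, r ≤ (i : ℕ) → e w i = 0 := by
  obtain ⟨C, hC⟩ := Submodule.exists_isCompl W
  have hsum : finrank K W + finrank K C = p := by
    rw [Submodule.finrank_add_eq_of_isCompl hC]
    simp [Module.finrank_pi]
  have eW : W ≃ₗ[K] (Fin r → K) := LinearEquiv.ofFinrankEq _ _ (by simp [hr, Module.finrank_pi])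
  have eC : C ≃ₗ[K] (Fin (p - r) → K) := LinearEquiv.ofFinrankEq _ _ (by simp [Module.finrank_pi]; omega)
  let e1 : (Fin p → K) ≃ₗ[K] W × C := (Submodule.prodEquivOfIsCompl W C hC).symm
  let e2 : (W × C) ≃ₗ[K] ((Fin r → K) × (Fin (p - r) → K)) := eW.prodCongr eC
  let e3 : ((Fin r → K) × (Fin (p - r) → K)) ≃ₗ[K] ((Fin r ⊕ Fin (p - r)) → K) :=
    (LinearEquiv.sumArrowLequivProdArrow _ _ K K).symm
  let e4 : ((Fin r ⊕ Fin (p - r)) → K) ≃ₗ[K] (Fin p → K) :=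
    LinearEquiv.funCongrLeft K K ((finCongr (by omega : p = r + (p - r))).trans finSumFinEquiv.symm)
  refine ⟨e1.trans (e2.trans (e3.trans e4)), fun w hw i hi => ?_⟩
  have h1 : e1 w = (⟨w, hw⟩, 0) := by
    apply (Submodule.prodEquivOfIsCompl W C hC).injective
    simp [e1, Submodule.coe_prodEquivOfIsCompl', Submodule.projection_add_projection_eq_self]
  have h2 : (((finCongr (by omega : p = r + (p - r))).trans finSumFinEquiv.symm)) i
      = Sum.inr ⟨(i : ℕ) - r, by omega⟩ := by
    apply finSumFinEquiv.injective
    simp only [Equiv.apply_symm_apply, Equiv.trans_apply, finSumFinEquiv_apply_right]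
    ext
    simp
    omega
  show e4 (e3 (e2 (e1 w))) i = 0
  rw [h1]
  have h3 : e2 (⟨w, hw⟩, 0) = (eW ⟨w, hw⟩, 0) := by
    simp only [e2, LinearEquiv.prodCongr_apply]
    rw [eC.map_zero]
  rw [h3]
  have h4 : e4 (e3 (eW ⟨w, hw⟩, 0)) i
      = Sum.elim (eW ⟨w, hw⟩) (0 : Fin (p - r) → K)
        ((((finCongr (by omega : p = r + (p - r))).trans finSumFinEquiv.symm)) i) := rfl
  rw [h4, h2]
  rfl

theorem stmt_0 {K : Type*} [Field K] {p q n : ℕ}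
    (M : Matrix (Fin p) (Fin q) K) (b : Fin q → Fin n)
    (h : ∀ f : Fin p → Fin q, Function.Injective (b ∘ f) →
      ¬ IsUnit (M.submatrix id f)) :
    ∃ (Q : Matrix (Fin p) (Fin p) K) (m : ℕ), IsUnit Q ∧ 0 < m ∧ m ≤ p ∧
      ∃ S : Finset (Fin n), S.card ≤ m - 1 ∧
        ∀ i : Fin n, i ∉ S → ∀ j : Fin q, b j = i →
          ∀ r : Fin p, p - m ≤ (r : ℕ) → (Q * M) r j = 0 := by
  classical
  set col : Fin q → (Fin p → K) := fun j r => M r j with hcol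
  set A : Fin n → Finset (Fin p → K) :=
    fun i => (Finset.univ.filter (fun j => b j = i)).image col with hA
  have hnot : ¬ ∀ S : Finset (Fin n),
      p + S.card ≤ finrank K (span K (↑(S.biUnion A) : Set (Fin p → K))) + n := by
    intro hypAll
    obtain ⟨g, v, hg, hvmem, hvind⟩ := rado_defect p A hypAll
    have hex : ∀ k, ∃ j, b j = g k ∧ col j = v k := by
      intro k
      have hm := hvmem k
      rw [hA] at hm
      obtain ⟨j, hj, hje⟩ := Finset.mem_image.mp hm
      exact ⟨j, (Finset.mem_filter.mp hj).2, hje⟩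
    choose f hf1 hf2 using hex
    have hbf : b ∘ f = g := funext fun k => hf1 k
    apply h f (by rw [hbf]; exact hg)
    rw [← Matrix.linearIndependent_cols_iff_isUnit]
    have hcols : (fun k => (M.submatrix id f)ᵀ k) = v := by
      funext k
      rw [← hf2 k]
      rfl
    show LinearIndependent K (fun k => (M.submatrix id f)ᵀ k)
    rw [hcols]
    exact hvind
  push_neg at hnot
  obtain ⟨S, hS⟩ := hnot
  set W := span K (↑(S.biUnion A) : Set (Fin p → K)) with hWdef
  have hcardn : S.card ≤ n := by
    simpa using Finset.card_le_univ S
  have hrp : finrank K W < p := by omega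
  obtain ⟨e, he⟩ := exists_equiv_kill W rfl (le_of_lt hrp)
  set Q := LinearMap.toMatrix' (e : (Fin p → K) →ₗ[K] (Fin p → K)) with hQ
  have hQunit : IsUnit Q := by
    refine isUnit_iff_exists.mpr ⟨LinearMap.toMatrix'
      (e.symm : (Fin p → K) →ₗ[K] (Fin p → K)), ?_, ?_⟩
    · rw [hQ, ← LinearMap.toMatrix'_comp]
      have : (e : (Fin p → K) →ₗ[K] (Fin p → K)) ∘ₗ
          (e.symm : (Fin p → K) →ₗ[K] (Fin p → K)) = LinearMap.id := by
        ext v; simp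
      rw [this, LinearMap.toMatrix'_id]
    · rw [hQ, ← LinearMap.toMatrix'_comp]
      have : (e.symm : (Fin p → K) →ₗ[K] (Fin p → K)) ∘ₗ
          (e : (Fin p → K) →ₗ[K] (Fin p → K)) = LinearMap.id := by
        ext v; simp
      rw [this, LinearMap.toMatrix'_id]
  refine ⟨Q, p - finrank K W, hQunit, by omega, by omega, Sᶜ, ?_, ?_⟩
  · have : Sᶜ.card = n - S.card := by
      rw [Finset.card_compl]
      simp
    omega
  · intro i hi j hbj rr hrr
    have hiS : i ∈ S := by simpa using hi
    have hcolW : col j ∈ W := by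
      apply subset_span
      rw [Finset.mem_coe, Finset.mem_biUnion]
      refine ⟨i, hiS, ?_⟩
      rw [hA]
      exact Finset.mem_image.mpr ⟨j, Finset.mem_filter.mpr ⟨Finset.mem_univ j, hbj⟩, rfl⟩
    have hmv : (Q * M) rr j = e (col j) rr := by
      have h1 : e (col j) = Q.mulVec (col j) := by
        rw [hQ]
        rw [← Matrix.toLin'_apply, Matrix.toLin'_toMatrix']
        rfl
      rw [h1]
      rw [Matrix.mul_apply, Matrix.mulVec, dotProduct]
    rw [hmv]
    apply he (col j) hcolW rr
    omega
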